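/- arXiv:1108.4439 — 5 statements merged into one kernel-verified Lean document; each statement's English description precedes it below -/
import Mathlib

section
/- For every finite candidate set C with |C| = m ≥ 2 and every preference pattern — an assignment to each unordered pair {a,b} of distinct candidates of either a strict preference (aPb or bPa) or indifference (aIb) — there exists a profile of exactly m(m−1) votes such that for all distinct candidates a,b: netadv(a,b) > 0 if the pattern has aPb, netadv(a,b) < 0 if the pattern has bPa, and netadv(a,b) = 0 if the pattern has aIb; in fact the constructed profile achieves netadv(a,b) = 2, −2, or 0 respectively. (McGarvey's Theorem) -/
/-- A vote over a finite candidate set `C` is a linear order on `C`, encoded as the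
ranking equivalence sending each candidate to its position (position `0` is the top). -/
abbrev Vote (C : Type*) [Fintype C] : Type _ := C ≃ Fin (Fintype.card C)

/-- `adv P a b` is the number of votes in the profile `P` ranking `a` above `b`. -/
def adv {C : Type*} [Fintype C] (P : List (Vote C)) (a b : C) : ℕ :=
  P.countP (fun v => decide (v a < v b))

/-- The net advantage of `a` over `b` in the profile `P`. -/
def netadv {C : Type*} [Fintype C] (P : List (Vote C)) (a b : C) : ℤ :=
  (adv P a b : ℤ) - (adv P b a : ℤ)

section Aux
set_option linter.unusedSectionVars false
variable {C : Type*} [Fintype C] [DecidableEq C]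

noncomputable def voteOfKey (w : C → ℤ) (hw : Function.Injective w) : Vote C :=
  letI : LinearOrder C := LinearOrder.lift' w hw
  ((monoEquivOfFin C rfl).toEquiv).symm

lemma voteOfKey_lt (w : C → ℤ) (hw : Function.Injective w) (x y : C) :
    voteOfKey w hw x < voteOfKey w hw y ↔ w x < w y := by
  letI : LinearOrder C := LinearOrder.lift' w hw
  change (monoEquivOfFin C rfl).symm x < (monoEquivOfFin C rfl).symm y ↔ _
  rw [← (monoEquivOfFin C rfl).lt_iff_lt]
  simp
  exact Iff.rfl

lemma netadv_append (P Q : List (Vote C)) (x y : C) :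
    netadv (P ++ Q) x y = netadv P x y + netadv Q x y := by
  simp [netadv, adv, List.countP_append]; ring

lemma netadv_single (v : Vote C) (x y : C) (h : x ≠ y) :
    netadv [v] x y = if v x < v y then 1 else -1 := by
  have hne : v x ≠ v y := fun hc => h (v.injective hc)
  rcases lt_or_gt_of_ne hne with hlt | hlt <;>
    simp [netadv, adv, List.countP_cons, hlt, not_lt_of_gt hlt, not_lt_of_gt]

lemma netadv_pair (v w : Vote C) (x y : C) (h : x ≠ y) :
    netadv [v, w] x y =
      (if v x < v y then 1 else -1) + (if w x < w y then 1 else -1) := by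
  have h2 : ([v, w] : List (Vote C)) = [v] ++ [w] := rfl
  rw [h2, netadv_append, netadv_single _ _ _ h, netadv_single _ _ _ h]

lemma netadv_flatMap {α : Type*} (l : List α) (f : α → List (Vote C)) (x y : C) :
    netadv (l.flatMap f) x y = (l.map (fun p => netadv (f p) x y)).sum := by
  induction l with
  | nil => simp [netadv, adv]
  | cons a t ih => simp [List.flatMap_cons, netadv_append, ih]

/-- key for the "top" vote: `a` first, `b` second, the rest in `e`-order. -/
def kT (e : C ≃ Fin (Fintype.card C)) (a b : C) (x : C) : ℤ :=
  if x = a then -2 else if x = b then -1 else ((e x : ℕ) : ℤ)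

/-- key for the "bottom" vote: the rest in reverse `e`-order, then `a`, then `b` last. -/
def kB (e : C ≃ Fin (Fintype.card C)) (a b : C) (x : C) : ℤ :=
  if x = a then (Fintype.card C : ℤ) else if x = b then (Fintype.card C : ℤ) + 1
  else -((e x : ℕ) : ℤ)

lemma e_val_inj (e : C ≃ Fin (Fintype.card C)) {x y : C}
    (h : ((e x : ℕ) : ℤ) = ((e y : ℕ) : ℤ)) : x = y :=
  e.injective (Fin.val_injective (by exact_mod_cast h))

lemma kT_inj (e : C ≃ Fin (Fintype.card C)) (a b : C) : Function.Injective (kT e a b) := by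
  intro x y h
  have hx := (e x).isLt
  have hy := (e y).isLt
  by_contra hne
  have hev : ((e x : ℕ) : ℤ) ≠ ((e y : ℕ) : ℤ) := fun hc => hne (e_val_inj e hc)
  unfold kT at h
  split_ifs at h <;> simp_all <;> omega

lemma kB_inj (e : C ≃ Fin (Fintype.card C)) (a b : C) : Function.Injective (kB e a b) := by
  intro x y h
  have hx := (e x).isLt
  have hy := (e y).isLt
  by_contra hne
  have hev : ((e x : ℕ) : ℤ) ≠ ((e y : ℕ) : ℤ) := fun hc => hne (e_val_inj e hc)
  unfold kB at h
  split_ifs at h <;> simp_all <;> omega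

noncomputable def tVote (e : C ≃ Fin (Fintype.card C)) (a b : C) : Vote C :=
  voteOfKey (kT e a b) (kT_inj e a b)

noncomputable def bVote (e : C ≃ Fin (Fintype.card C)) (a b : C) : Vote C :=
  voteOfKey (kB e a b) (kB_inj e a b)

lemma blockP (e : C ≃ Fin (Fintype.card C)) {a b x y : C}
    (hab : a ≠ b) (hxy : x ≠ y) :
    netadv [tVote e a b, bVote e a b] x y =
      if x = a ∧ y = b then 2 else if x = b ∧ y = a then -2 else 0 := by
  rw [netadv_pair _ _ _ _ hxy]
  unfold tVote bVote
  simp only [voteOfKey_lt]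
  have hx := (e x).isLt
  have hy := (e y).isLt
  have hev : ((e x : ℕ) : ℤ) ≠ ((e y : ℕ) : ℤ) := fun hc => hxy (e_val_inj e hc)
  unfold kT kB
  by_cases hxa : x = a <;> by_cases hxb : x = b <;> by_cases hya : y = a <;>
    by_cases hyb : y = b <;> simp_all <;> split_ifs <;> omega

lemma blockI (e : C ≃ Fin (Fintype.card C)) {a b x y : C}
    (hab : a ≠ b) (hxy : x ≠ y) :
    netadv [tVote e a b, bVote e b a] x y = 0 := by
  rw [netadv_pair _ _ _ _ hxy]
  unfold tVote bVote
  simp only [voteOfKey_lt]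
  have hx := (e x).isLt
  have hy := (e y).isLt
  have hev : ((e x : ℕ) : ℤ) ≠ ((e y : ℕ) : ℤ) := fun hc => hxy (e_val_inj e hc)
  unfold kT kB
  by_cases hxa : x = a <;> by_cases hxb : x = b <;> by_cases hya : y = a <;>
    by_cases hyb : y = b <;> simp_all <;> split_ifs <;> omega

end Aux

/-- **McGarvey's Theorem.** For any preference pattern (assigning to each pair of distinct
candidates either a strict preference or indifference, encoded by an asymmetric relation
`pref`, indifference being the absence of a strict preference either way) on a candidate
set of size `m ≥ 2`, there is a profile of exactly `m * (m - 1)` votes whose net advantage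
is `2`, `-2`, or `0` according to the pattern. -/
theorem mcgarvey {C : Type*} [Fintype C] [DecidableEq C]
    (hm : 2 ≤ Fintype.card C)
    (pref : C → C → Prop)
    (hasym : ∀ a b : C, pref a b → ¬ pref b a) :
    ∃ P : List (Vote C),
      P.length = Fintype.card C * (Fintype.card C - 1) ∧
      ∀ a b : C, a ≠ b →
        (pref a b → netadv P a b = 2) ∧
        (pref b a → netadv P a b = -2) ∧
        (¬ pref a b → ¬ pref b a → netadv P a b = 0) := by
  classical
  set e : C ≃ Fin (Fintype.card C) := Fintype.equivFin C with he
  set block : C × C → List (Vote C) := fun p =>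
    if pref p.1 p.2 then [tVote e p.1 p.2, bVote e p.1 p.2]
    else if pref p.2 p.1 then [tVote e p.2 p.1, bVote e p.2 p.1]
    else [tVote e p.1 p.2, bVote e p.2 p.1] with hblockdef
  set S : Finset (C × C) :=
    Finset.univ.filter (fun p => (e p.1 : ℕ) < (e p.2 : ℕ)) with hS
  have hblock : ∀ a b x y : C, a ≠ b → x ≠ y →
      netadv (block (a, b)) x y =
        if (x = a ∧ y = b) ∨ (x = b ∧ y = a) then
          (if pref x y then 2 else if pref y x then -2 else 0) else 0 := by
    intro a b x y hab hxy
    have hb1 : block (a, b) =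
        if pref a b then [tVote e a b, bVote e a b]
        else if pref b a then [tVote e b a, bVote e b a]
        else [tVote e a b, bVote e b a] := rfl
    rw [hb1]
    by_cases h1 : pref a b
    · rw [if_pos h1, blockP e hab hxy]
      by_cases hx : x = a ∧ y = b
      · obtain ⟨rfl, rfl⟩ := hx
        simp [h1]
      · by_cases hy : x = b ∧ y = a
        · obtain ⟨rfl, rfl⟩ := hy
          simp [hab, hab.symm, hasym _ _ h1, h1]
        · simp [hx, hy]
    · rw [if_neg h1]
      by_cases h2 : pref b a
      · rw [if_pos h2, blockP e hab.symm hxy]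
        by_cases hy : x = b ∧ y = a
        · obtain ⟨rfl, rfl⟩ := hy
          simp [h2, hab, hab.symm]
        · by_cases hx : x = a ∧ y = b
          · obtain ⟨rfl, rfl⟩ := hx
            simp [hab, hab.symm, h1, h2]
          · simp [hx, hy]
      · rw [if_neg h2, blockI e hab hxy]
        by_cases hx : x = a ∧ y = b
        · obtain ⟨rfl, rfl⟩ := hx
          simp [h1, h2]
        · by_cases hy : x = b ∧ y = a
          · obtain ⟨rfl, rfl⟩ := hy
            simp [h1, h2]
          · simp [hx, hy]
  refine ⟨S.toList.flatMap block, ?_, ?_⟩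
  · -- length
    have hlen2 : ∀ p : C × C, (block p).length = 2 := by
      intro p
      have hb1 : block p =
          if pref p.1 p.2 then [tVote e p.1 p.2, bVote e p.1 p.2]
          else if pref p.2 p.1 then [tVote e p.2 p.1, bVote e p.2 p.1]
          else [tVote e p.1 p.2, bVote e p.2 p.1] := rfl
      rw [hb1]
      split_ifs <;> rfl
    have hcard : S.card * 2 = Fintype.card C * Fintype.card C - Fintype.card C := by
      set S' : Finset (C × C) :=
        Finset.univ.filter (fun p => (e p.2 : ℕ) < (e p.1 : ℕ)) with hS'
      have h1 : S.card = S'.card := by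
        refine Finset.card_bij (fun p _ => p.swap) ?_ ?_ ?_
        · intro p hp
          simp only [hS, hS', Finset.mem_filter, Finset.mem_univ, true_and] at hp ⊢
          exact hp
        · intro p hp q hq hpq
          exact Prod.swap_injective hpq
        · intro q hq
          refine ⟨q.swap, ?_, by simp⟩
          simp only [hS, hS', Finset.mem_filter, Finset.mem_univ, true_and] at hq ⊢
          exact hq
      have hdisj : Disjoint S S' := by
        rw [Finset.disjoint_left]
        intro p hp hp'
        simp only [hS, hS', Finset.mem_filter, Finset.mem_univ, true_and] at hp hp'
        omega
      have hunion : S ∪ S' = Finset.univ.offDiag := by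
        ext p
        simp only [hS, hS', Finset.mem_union, Finset.mem_filter, Finset.mem_univ, true_and,
          Finset.mem_offDiag]
        constructor
        · intro h hc
          rcases h with h | h <;> rw [hc] at h <;> omega
        · intro hne
          have : (e p.1 : ℕ) ≠ (e p.2 : ℕ) := by
            intro hc
            exact hne (e.injective (Fin.val_injective hc))
          omega
      have hu := Finset.card_union_of_disjoint hdisj
      rw [hunion, Finset.offDiag_card, Finset.card_univ] at hu
      omega
    rw [List.length_flatMap]
    have h2 : (List.map (List.length ∘ block) S.toList).sum = 2 * S.toList.length := by
      have hc : (List.length ∘ block) = fun _ : C × C => 2 := funext hlen2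
      rw [hc]
      simp [List.map_const', mul_comm]
    change (List.map (List.length ∘ block) S.toList).sum = _
    rw [h2, Finset.length_toList]
    have hmul : ∀ n : ℕ, n * (n - 1) = n * n - n := by
      intro n
      cases n with
      | zero => simp
      | succ k =>
        have h2 : (k + 1) * (k + 1) = (k + 1) * k + (k + 1) := by ring
        simp only [Nat.add_sub_cancel]
        omega
    rw [hmul]
    omega
  · -- netadv values
    have hnet : ∀ x y : C, x ≠ y →
        netadv (S.toList.flatMap block) x y =
          (if pref x y then 2 else if pref y x then -2 else 0) := by
      intro x y hxy
      rw [netadv_flatMap, Finset.sum_map_toList]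
      have hexy : (e x : ℕ) ≠ (e y : ℕ) := by
        intro hc; exact hxy (e.injective (Fin.val_injective hc))
      set c : C × C := if (e x : ℕ) < (e y : ℕ) then (x, y) else (y, x) with hc
      have hcS : c ∈ S := by
        by_cases h : (e x : ℕ) < (e y : ℕ) <;>
          simp only [hc, h, if_true, if_false, hS, Finset.mem_filter, Finset.mem_univ,
            true_and] <;> omega
      rw [Finset.sum_eq_single c]
      · by_cases h : (e x : ℕ) < (e y : ℕ)
        · have hceq : c = (x, y) := by simp [hc, h]
          rw [hceq, hblock x y x y hxy hxy]
          simp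
        · have hceq : c = (y, x) := by simp [hc, h]
          rw [hceq, hblock y x x y hxy.symm hxy]
          simp
      · rintro ⟨a, b⟩ hpS hpc
        have habe : (e a : ℕ) < (e b : ℕ) := by
          simpa only [hS, Finset.mem_filter, Finset.mem_univ, true_and] using hpS
        have hab : a ≠ b := by
          intro hc'; rw [hc'] at habe; omega
        rw [hblock a b x y hab hxy]
        rw [if_neg]
        rintro (⟨rfl, rfl⟩ | ⟨rfl, rfl⟩)
        · exact hpc (by simp [hc, habe])
        · refine hpc ?_
          have hnlt : ¬ (e x : ℕ) < (e y : ℕ) := by omega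
          simp [hc, hnlt]
      · intro hc'
        exact absurd hcS hc'
    intro a b hab
    refine ⟨?_, ?_, ?_⟩
    · intro h
      rw [hnet a b hab]; simp [h]
    · intro h
      have h' : ¬ pref a b := hasym b a h
      rw [hnet a b hab]; simp [h, h']
    · intro h1 h2
      rw [hnet a b hab]; simp [h1, h2]
end

section
/- Let C be a finite candidate set with |C| = m ≥ 2, let a,b ∈ C be distinct, and let c₁,…,c_{m−2} enumerate C∖{a,b}. Consider the profile consisting of the two votes v₁ : a > b > c₁ > ⋯ > c_{m−2} and v₂ : c_{m−2} > ⋯ > c₁ > a > b. Then netadv(a,b) = 2, and netadv(x,y) = 0 for every pair of distinct candidates {x,y} ≠ {a,b}. -/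
lemma netadv_pair_s1 {C : Type*} [Fintype C] (v₁ v₂ : Vote C) (x y : C)
    (p q r s : ℕ) (h1 : (v₁ x : ℕ) = p) (h2 : (v₁ y : ℕ) = q)
    (h3 : (v₂ x : ℕ) = r) (h4 : (v₂ y : ℕ) = s) :
    netadv [v₁, v₂] x y =
      ((if p < q then 1 else 0) + (if r < s then 1 else 0) : ℤ) -
      ((if q < p then 1 else 0) + (if s < r then 1 else 0)) := by
  simp only [netadv, adv, List.countP_cons, List.countP_nil, decide_eq_true_eq,
    Fin.lt_def, h1, h2, h3, h4]
  push_cast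
  split_ifs <;> omega

/-- The basic McGarvey gadget: with distinct candidates `a, b` and `c₁, …, c_{m-2}`
enumerating the remaining candidates (via the equivalence `g`, with `g i` playing the
role of `c_{i+1}`), the two votes
`v₁ : a > b > c₁ > ⋯ > c_{m-2}` and `v₂ : c_{m-2} > ⋯ > c₁ > a > b` give
`netadv a b = 2` and `netadv x y = 0` for every other pair of distinct candidates. -/
theorem mcgarvey_gadget {C : Type*} [Fintype C] [DecidableEq C]
    (hm : 2 ≤ Fintype.card C) (a b : C) (hab : a ≠ b)
    (g : Fin (Fintype.card C - 2) ≃ {x : C // x ≠ a ∧ x ≠ b})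
    (v₁ v₂ : Vote C)
    (h1a : (v₁ a : ℕ) = 0)
    (h1b : (v₁ b : ℕ) = 1)
    (h1g : ∀ i : Fin (Fintype.card C - 2), (v₁ (g i : C) : ℕ) = (i : ℕ) + 2)
    (h2g : ∀ i : Fin (Fintype.card C - 2),
      (v₂ (g i : C) : ℕ) = (Fintype.card C - 3) - (i : ℕ))
    (h2a : (v₂ a : ℕ) = Fintype.card C - 2)
    (h2b : (v₂ b : ℕ) = Fintype.card C - 1) :
    netadv [v₁, v₂] a b = 2 ∧
    ∀ x y : C, x ≠ y → ¬(x = a ∧ y = b) → ¬(x = b ∧ y = a) →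
      netadv [v₁, v₂] x y = 0 := by
  have key : ∀ x : C, x = a ∨ x = b ∨ ∃ i, x = (g i : C) := by
    intro x
    by_cases hxa : x = a
    · exact Or.inl hxa
    by_cases hxb : x = b
    · exact Or.inr (Or.inl hxb)
    · exact Or.inr (Or.inr ⟨g.symm ⟨x, hxa, hxb⟩, by simp⟩)
  constructor
  · rw [netadv_pair_s1 v₁ v₂ a b 0 1 (Fintype.card C - 2) (Fintype.card C - 1)
      h1a h1b h2a h2b]
    split_ifs <;> omega
  · intro x y hxy hnab hnba
    rcases key x with hx | hx | ⟨i, hx⟩ <;> rcases key y with hy | hy | ⟨j, hy⟩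
    · exact absurd (hx.trans hy.symm) hxy
    · exact absurd ⟨hx, hy⟩ hnab
    · have hjb := j.isLt
      rw [hx, hy, netadv_pair_s1 v₁ v₂ a (g j : C) 0 ((j : ℕ) + 2)
        (Fintype.card C - 2) (Fintype.card C - 3 - (j : ℕ)) h1a (h1g j) h2a (h2g j)]
      split_ifs <;> omega
    · exact absurd ⟨hx, hy⟩ hnba
    · exact absurd (hx.trans hy.symm) hxy
    · have hjb := j.isLt
      rw [hx, hy, netadv_pair_s1 v₁ v₂ b (g j : C) 1 ((j : ℕ) + 2)
        (Fintype.card C - 1) (Fintype.card C - 3 - (j : ℕ)) h1b (h1g j) h2b (h2g j)]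
      split_ifs <;> omega
    · have hib := i.isLt
      rw [hx, hy, netadv_pair_s1 v₁ v₂ (g i : C) a ((i : ℕ) + 2) 0
        (Fintype.card C - 3 - (i : ℕ)) (Fintype.card C - 2) (h1g i) h1a (h2g i) h2a]
      split_ifs <;> omega
    · have hib := i.isLt
      rw [hx, hy, netadv_pair_s1 v₁ v₂ (g i : C) b ((i : ℕ) + 2) 1
        (Fintype.card C - 3 - (i : ℕ)) (Fintype.card C - 1) (h1g i) h1b (h2g i) h2b]
      split_ifs <;> omega
    · have hib := i.isLt
      have hjb := j.isLt
      have hij : (i : ℕ) ≠ (j : ℕ) := by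
        intro h
        apply hxy
        rw [hx, hy, Fin.val_injective h]
      rw [hx, hy, netadv_pair_s1 v₁ v₂ (g i : C) (g j : C) ((i : ℕ) + 2) ((j : ℕ) + 2)
        (Fintype.card C - 3 - (i : ℕ)) (Fintype.card C - 3 - (j : ℕ))
        (h1g i) (h1g j) (h2g i) (h2g j)]
      split_ifs <;> omega
end

section
/- Consider a Borda election with candidate set C = {c*} ∪ {c_1,…,c_m} of m+1 candidates, a profile V_NM of nonmanipulative votes giving each candidate x Borda score score(x), and t manipulative votes to be added. Define the gap of c_i as g_i = score(c*) + t·m − score(c_i). If there exist t votes (linear orders on C) such that, after adding them to V_NM, the final Borda score of c* is at least the final Borda score of every c_i, then for every j ∈ {1,…,m} and every subset S ⊆ {c_1,…,c_m} with |S| = j, one has ∑_{c_i ∈ S} g_i ≥ t·j(j−1)/2; in particular the sum of the j smallest gaps is at least t·j(j−1)/2. -/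
/-- Borda points awarded by the vote `v` to candidate `x`. -/
def bordaPts {C : Type*} [Fintype C] (v : Vote C) (x : C) : ℕ :=
  (Fintype.card C - 1) - (v x : ℕ)

/-- The Borda score of candidate `x` in the profile `P`. -/
def bordaScore {C : Type*} [Fintype C] (P : List (Vote C)) (x : C) : ℕ :=
  (P.map (fun v => bordaPts v x)).sum

lemma sum_finset_nat_ge' (T : Finset ℕ) : T.card * (T.card - 1) ≤ 2 * ∑ x ∈ T, x := by
  induction T using Finset.induction_on_max with
  | empty => simp
  | insert a s ha ih =>
    have has : a ∉ s := fun h => lt_irrefl a (ha a h)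
    have hsub : s ⊆ Finset.range a := fun x hx => Finset.mem_range.2 (ha x hx)
    have hcard : s.card ≤ a := by simpa using Finset.card_le_card hsub
    rw [Finset.card_insert_of_notMem has, Finset.sum_insert has]
    have hexp : (s.card + 1) * (s.card + 1 - 1) = s.card * (s.card - 1) + 2 * s.card := by
      cases s.card with
      | zero => simp
      | succ n => simp [Nat.succ_sub_one]; ring
    omega

lemma sum_finset_nat_ge (T : Finset ℕ) : T.card * (T.card - 1) / 2 ≤ ∑ x ∈ T, x := by
  have := Nat.div_le_div_right (c := 2) (sum_finset_nat_ge' T)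
  simpa using this

lemma vote_sum_bound {C : Type*} [Fintype C] [DecidableEq C] (v : Vote C) (S : Finset C) :
    S.card * (S.card - 1) / 2 ≤ ∑ x ∈ S, bordaPts v x := by
  have hinj : Set.InjOn (fun x => bordaPts v x) S := by
    intro x hx y hy hxy
    have hx1 : (v x : ℕ) ≤ Fintype.card C - 1 := Nat.le_pred_of_lt (v x).isLt
    have hy1 : (v y : ℕ) ≤ Fintype.card C - 1 := Nat.le_pred_of_lt (v y).isLt
    have : (v x : ℕ) = (v y : ℕ) := by
      simp only [bordaPts] at hxy; omega
    exact v.injective (Fin.ext this)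
  have := sum_finset_nat_ge (S.image (fun x => bordaPts v x))
  rwa [Finset.card_image_of_injOn hinj, Finset.sum_image hinj] at this

lemma profile_sum_bound {C : Type*} [Fintype C] [DecidableEq C] (W : List (Vote C))
    (S : Finset C) :
    W.length * (S.card * (S.card - 1) / 2) ≤ ∑ x ∈ S, bordaScore W x := by
  induction W with
  | nil => simp [bordaScore]
  | cons w W ih =>
    have hscore : ∀ x, bordaScore (w :: W) x = bordaPts w x + bordaScore W x := by
      intro x; simp [bordaScore]
    simp only [hscore, Finset.sum_add_distrib, List.length_cons]
    have h1 := vote_sum_bound w S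
    have h2 : (W.length + 1) * (S.card * (S.card - 1) / 2)
        = W.length * (S.card * (S.card - 1) / 2) + S.card * (S.card - 1) / 2 := by ring
    omega

lemma bordaScore_append {C : Type*} [Fintype C] (P Q : List (Vote C)) (x : C) :
    bordaScore (P ++ Q) x = bordaScore P x + bordaScore Q x := by
  simp [bordaScore]

/-- Necessary condition for Borda manipulation: in a Borda election with candidates
`{c*} ∪ {c_1, …, c_m}` (so `m = |C| - 1`), nonmanipulative profile `VNM`, and `t`
manipulative votes `W`, define the gap of a candidate `x ≠ c*` as
`g(x) = score(c*) + t·m - score(x)` (scores over `VNM`). If after adding `W` the final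
Borda score of `c*` is at least that of every other candidate, then for every set `S`
of `j` non-`c*` candidates, `∑_{x ∈ S} g(x) ≥ t·j(j-1)/2`; in particular the sum of
the `j` smallest gaps is at least `t·j(j-1)/2`. -/
theorem borda_manipulation_gap_bound {C : Type*} [Fintype C] [DecidableEq C]
    (hm : 2 ≤ Fintype.card C)
    (cstar : C) (VNM W : List (Vote C)) (t : ℕ) (hW : W.length = t)
    (gap : C → ℤ)
    (hgap : ∀ x : C, gap x =
      (bordaScore VNM cstar : ℤ) + (t : ℤ) * ((Fintype.card C : ℤ) - 1)
        - (bordaScore VNM x : ℤ))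
    (hwin : ∀ x : C, x ≠ cstar →
      bordaScore (VNM ++ W) x ≤ bordaScore (VNM ++ W) cstar) :
    ∀ S : Finset C, cstar ∉ S →
      ((t * (S.card * (S.card - 1) / 2) : ℕ) : ℤ) ≤ ∑ x ∈ S, gap x := by
  intro S hS
  -- Step 1: gap x ≥ bordaScore W x for x ∈ S
  have hle : ∀ x ∈ S, (bordaScore W x : ℤ) ≤ gap x := by
    intro x hx
    have hne : x ≠ cstar := fun h => hS (h ▸ hx)
    have hw := hwin x hne
    rw [bordaScore_append, bordaScore_append] at hw
    have hWc : bordaScore W cstar ≤ t * (Fintype.card C - 1) := by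
      have : ∀ y ∈ W.map (fun v => bordaPts v cstar), y ≤ Fintype.card C - 1 := by
        intro y hy
        simp only [List.mem_map] at hy
        obtain ⟨v, _, rfl⟩ := hy
        exact Nat.sub_le _ _
      have := List.sum_le_card_nsmul _ _ this
      simpa [bordaScore, hW, mul_comm] using this
    rw [hgap x]
    have hcast : ((Fintype.card C : ℤ) - 1) = ((Fintype.card C - 1 : ℕ) : ℤ) := by
      have : 1 ≤ Fintype.card C := le_trans (by norm_num) hm
      push_cast [this]; ring
    rw [hcast]
    push_cast [← hW] at hWc ⊢
    omega
  calc ((t * (S.card * (S.card - 1) / 2) : ℕ) : ℤ)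
      ≤ ((∑ x ∈ S, bordaScore W x : ℕ) : ℤ) := by
        exact_mod_cast (hW ▸ profile_sum_bound W S)
    _ = ∑ x ∈ S, (bordaScore W x : ℤ) := by push_cast; ring
    _ ≤ ∑ x ∈ S, gap x := Finset.sum_le_sum hle
end

section
/- Consider a Borda election with candidate set C = {c*} ∪ {c_1,…,c_m} of m+1 candidates, a profile V_NM of nonmanipulative votes giving each candidate x Borda score score(x), and t manipulative votes to be added, with gaps g_i = score(c*) + t·m − score(c_i). Suppose the instance is tight, i.e., ∑_{i=1}^m g_i = t·m(m−1)/2. If t added votes make the final Borda score of c* at least that of every c_i, then every one of the t manipulative votes ranks c* first, and each candidate c_i receives exactly g_i Borda points in total from the t manipulative votes. -/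
lemma sum_bordaPts {C : Type*} [Fintype C] (v : Vote C) :
    (∑ x : C, bordaPts v x) * 2 = Fintype.card C * (Fintype.card C - 1) := by
  have h1 : (∑ x : C, bordaPts v x)
      = ∑ k : Fin (Fintype.card C), (Fintype.card C - 1 - (k : ℕ)) :=
    Fintype.sum_equiv v _ _ (fun x => rfl)
  rw [h1, Fin.sum_univ_eq_sum_range (fun k => Fintype.card C - 1 - k)]
  rw [Finset.sum_range_reflect (fun k => k) (Fintype.card C)]
  exact Finset.sum_range_id_mul_two _

lemma bordaPts_le {C : Type*} [Fintype C] (v : Vote C) (x : C) :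
    bordaPts v x ≤ Fintype.card C - 1 := Nat.sub_le _ _

lemma bordaScore_le {C : Type*} [Fintype C] (W : List (Vote C)) (x : C) :
    bordaScore W x ≤ W.length * (Fintype.card C - 1) := by
  induction W with
  | nil => simp [bordaScore]
  | cons v W ih =>
    simp only [bordaScore, List.map_cons, List.sum_cons, List.length_cons] at *
    have h := bordaPts_le v x
    rw [Nat.succ_mul]
    omega

lemma sum_bordaScore {C : Type*} [Fintype C] (W : List (Vote C)) :
    (∑ x : C, bordaScore W x) * 2 = W.length * (Fintype.card C * (Fintype.card C - 1)) := by
  induction W with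
  | nil => simp [bordaScore]
  | cons v W ih =>
    simp only [bordaScore, List.map_cons, List.sum_cons, List.length_cons] at *
    rw [Finset.sum_add_distrib, add_mul, ih, sum_bordaPts]
    ring

lemma list_all_eq_of_sum {l : List ℕ} {B : ℕ} (h : ∀ a ∈ l, a ≤ B)
    (hs : l.sum = l.length * B) : ∀ a ∈ l, a = B := by
  induction l with
  | nil => simp
  | cons a l ih =>
    simp only [List.sum_cons, List.length_cons, Nat.succ_mul] at hs
    have ha : a ≤ B := h a List.mem_cons_self
    have hl : l.sum ≤ l.length * B := by
      have := List.sum_le_card_nsmul l B (fun x hx => h x (List.mem_cons_of_mem _ hx))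
      simpa [smul_eq_mul] using this
    have haB : a = B := by omega
    have hls : l.sum = l.length * B := by omega
    intro b hb
    rcases List.mem_cons.mp hb with rfl | hb
    · exact haB
    · exact ih (fun x hx => h x (List.mem_cons_of_mem _ hx)) hls b hb

set_option maxHeartbeats 1600000 in
/-- Tight Borda manipulation instances: with candidates `{c*} ∪ {c_1, …, c_m}`
(`m = |C| - 1`), nonmanipulative profile `VNM`, `t` manipulative votes `W`, and gaps
`g(x) = score(c*) + t·m - score(x)`, suppose the instance is tight, i.e.
`∑_{x ≠ c*} g(x) = t·m(m-1)/2`. If adding `W` makes the final Borda score of `c*` at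
least that of every other candidate, then every manipulative vote ranks `c*` first and
every candidate `x ≠ c*` receives exactly `g(x)` Borda points from the votes of `W`. -/
theorem borda_tight_manipulation {C : Type*} [Fintype C] [DecidableEq C]
    (hm : 2 ≤ Fintype.card C)
    (cstar : C) (VNM W : List (Vote C)) (t : ℕ) (hW : W.length = t)
    (gap : C → ℤ)
    (hgap : ∀ x : C, gap x =
      (bordaScore VNM cstar : ℤ) + (t : ℤ) * ((Fintype.card C : ℤ) - 1)
        - (bordaScore VNM x : ℤ))
    (htight : ∑ x ∈ Finset.univ.erase cstar, gap x =
      ((t * ((Fintype.card C - 1) * (Fintype.card C - 2) / 2) : ℕ) : ℤ))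
    (hwin : ∀ x : C, x ≠ cstar →
      bordaScore (VNM ++ W) x ≤ bordaScore (VNM ++ W) cstar) :
    (∀ v ∈ W, (v cstar : ℕ) = 0) ∧
    (∀ x : C, x ≠ cstar → (bordaScore W x : ℤ) = gap x) := by
  set n := Fintype.card C with hn
  clear_value n
  have hn1 : ((n - 1 : ℕ) : ℤ) = (n : ℤ) - 1 := by omega
  have hn2 : ((n - 2 : ℕ) : ℤ) = (n : ℤ) - 2 := by omega
  set S : ℤ := (bordaScore W cstar : ℤ) with hS
  set d : ℤ := (t : ℤ) * ((n : ℤ) - 1) - S with hd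
  set G : ℤ := ∑ x ∈ Finset.univ.erase cstar, gap x with hGdef
  clear_value S d G
  have hd_nonneg : 0 ≤ d := by
    have h0 := bordaScore_le W cstar
    rw [hW, ← hn] at h0
    have h1 : (bordaScore W cstar : ℤ) ≤ ((t * (n - 1) : ℕ) : ℤ) := by exact_mod_cast h0
    rw [hd, hS]
    push_cast [hn1] at h1
    linarith
  -- per-candidate inequality
  have hineq : ∀ x : C, x ≠ cstar → (bordaScore W x : ℤ) ≤ gap x - d := by
    intro x hx
    have h := hwin x hx
    rw [bordaScore_append, bordaScore_append] at h
    have h' : (bordaScore VNM x : ℤ) + (bordaScore W x : ℤ)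
        ≤ (bordaScore VNM cstar : ℤ) + (bordaScore W cstar : ℤ) := by exact_mod_cast h
    rw [hgap x, hd, hS]
    linarith
  -- tightness doubled
  have heven : ∃ k : ℕ, (n - 1) * (n - 2) = 2 * k := by
    rcases Nat.even_or_odd (n - 1) with ⟨k, hk⟩ | ⟨k, hk⟩
    · exact ⟨k * (n - 2), by rw [hk]; ring⟩
    · refine ⟨(n - 1) * k, ?_⟩
      have : n - 2 = 2 * k := by omega
      rw [this]; ring
  obtain ⟨k, hk⟩ := heven
  have h2k : (2 : ℤ) * (k : ℤ) = ((n : ℤ) - 1) * ((n : ℤ) - 2) := by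
    rw [← hn1, ← hn2]; exact_mod_cast hk.symm
  have hG2 : 2 * G = (t : ℤ) * (((n : ℤ) - 1) * ((n : ℤ) - 2)) := by
    rw [htight]
    have hdiv : (t * ((n - 1) * (n - 2) / 2) : ℕ) = t * k := by
      rw [hk, Nat.mul_div_cancel_left _ (by norm_num)]
    rw [hdiv]
    push_cast
    linear_combination (t : ℤ) * h2k
  -- total score of W doubled
  have hT2 : (∑ x : C, (bordaScore W x : ℤ)) * 2
      = (t : ℤ) * ((n : ℤ) * ((n : ℤ) - 1)) := by
    have h0 := sum_bordaScore W
    rw [hW, ← hn] at h0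
    have hc : ((∑ x : C, bordaScore W x : ℕ) : ℤ) * 2 = ((t * (n * (n - 1)) : ℕ) : ℤ) := by
      exact_mod_cast congrArg (Nat.cast : ℕ → ℤ) h0
    push_cast [hn1] at hc
    push_cast
    linarith
  -- split sum
  have hsplit : (∑ x ∈ Finset.univ.erase cstar, (bordaScore W x : ℤ)) + S
      = ∑ x : C, (bordaScore W x : ℤ) := by
    rw [hS]
    exact Finset.sum_erase_add _ _ (Finset.mem_univ cstar)
  have hcard : (Finset.univ.erase cstar).card = n - 1 := by
    rw [Finset.card_erase_of_mem (Finset.mem_univ _), Finset.card_univ, ← hn]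
  -- sum inequality
  have hsumineq : (∑ x ∈ Finset.univ.erase cstar, (bordaScore W x : ℤ))
      ≤ G - ((n : ℤ) - 1) * d := by
    calc (∑ x ∈ Finset.univ.erase cstar, (bordaScore W x : ℤ))
        ≤ ∑ x ∈ Finset.univ.erase cstar, (gap x - d) := by
          apply Finset.sum_le_sum
          intro x hx
          exact hineq x (Finset.ne_of_mem_erase hx)
      _ = G - ((n : ℤ) - 1) * d := by
          rw [Finset.sum_sub_distrib, Finset.sum_const, hcard, nsmul_eq_mul, hn1, hGdef]
  -- key identity
  have hident : (t : ℤ) * ((n : ℤ) * ((n : ℤ) - 1)) - 2 * ((t : ℤ) * ((n : ℤ) - 1))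
      = (t : ℤ) * (((n : ℤ) - 1) * ((n : ℤ) - 2)) := by ring
  have h2S : 2 * S = 2 * ((t : ℤ) * ((n : ℤ) - 1)) - 2 * d := by rw [hd]; ring
  -- derive d = 0
  have hnd : 2 * (n : ℤ) * d ≤ 0 := by
    have h1 : 2 * (∑ x ∈ Finset.univ.erase cstar, (bordaScore W x : ℤ))
        = (t : ℤ) * ((n : ℤ) * ((n : ℤ) - 1)) - 2 * S := by
      linarith [hsplit, hT2]
    have h2 : 2 * (∑ x ∈ Finset.univ.erase cstar, (bordaScore W x : ℤ))
        ≤ 2 * G - 2 * ((n : ℤ) - 1) * d := by linarith [hsumineq]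
    have h3 : 2 * ((n : ℤ) - 1) * d + 2 * d = 2 * (n : ℤ) * d := by ring
    linarith [hG2, hident, h2S]
  have hnpos : (2 : ℤ) ≤ (n : ℤ) := by exact_mod_cast hm
  have hd0 : d = 0 := by nlinarith [hd_nonneg, hnd, hnpos]
  -- the sum equals G
  have hsum_eq : (∑ x ∈ Finset.univ.erase cstar, (bordaScore W x : ℤ)) = G := by
    have h1 : 2 * (∑ x ∈ Finset.univ.erase cstar, (bordaScore W x : ℤ))
        = (t : ℤ) * ((n : ℤ) * ((n : ℤ) - 1)) - 2 * S := by
      linarith [hsplit, hT2]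
    rw [hd] at hd0
    linarith [hG2, hident]
  have hle : ∀ x ∈ Finset.univ.erase cstar, (bordaScore W x : ℤ) ≤ gap x := by
    intro x hx
    have h := hineq x (Finset.ne_of_mem_erase hx)
    rw [hd0] at h
    linarith
  have hsecond : ∀ x : C, x ≠ cstar → (bordaScore W x : ℤ) = gap x := by
    intro x hx
    have hmem : x ∈ Finset.univ.erase cstar := Finset.mem_erase.mpr ⟨hx, Finset.mem_univ x⟩
    have hzero : ∑ y ∈ Finset.univ.erase cstar, (gap y - (bordaScore W y : ℤ)) = 0 := by
      rw [Finset.sum_sub_distrib, hsum_eq, hGdef]; ring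
    have := (Finset.sum_eq_zero_iff_of_nonneg
      (fun y hy => by linarith [hle y hy])).mp hzero x hmem
    linarith
  refine ⟨?_, hsecond⟩
  -- first conclusion
  have hScstar : bordaScore W cstar = W.length * (Fintype.card C - 1) := by
    rw [← hn]
    have h1 : S = (t : ℤ) * ((n : ℤ) - 1) := by rw [hd] at hd0; linarith
    rw [hS] at h1
    have h2 : (bordaScore W cstar : ℤ) = ((t * (n - 1) : ℕ) : ℤ) := by
      push_cast [hn1]; linarith
    have h3 : bordaScore W cstar = t * (n - 1) := by exact_mod_cast h2
    rw [h3, hW]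
  have hall := list_all_eq_of_sum (l := W.map (fun v => bordaPts v cstar)) (B := Fintype.card C - 1)
    (by intro a ha
        obtain ⟨v, _, rfl⟩ := List.mem_map.mp ha
        exact bordaPts_le v cstar)
    (by rw [List.length_map]; exact hScstar)
  intro v hv
  have hB : bordaPts v cstar = Fintype.card C - 1 :=
    hall _ (List.mem_map.mpr ⟨v, hv, rfl⟩)
  have hlt : (v cstar : ℕ) < Fintype.card C := (v cstar).isLt
  simp only [bordaPts] at hB
  rw [hn] at hm
  omega
end

section
/- Let k ≥ 1 and let a_1,…,a_k be integers with 1 ≤ a_i ≤ 2k for all i and ∑_{i=1}^k a_i = k(k+1). Then the following are equivalent: (i) there exist permutations ψ₁ and ψ₂ of {1,…,k} such that ψ₁(i) + ψ₂(i) = a_i for every i (a solution of the 2-Numerical Matching with Target Sums instance); (ii) there exist two linear orders on the (k+1)-element candidate set {p, c_1,…,c_k}, each ranking p first, such that for every i the total Borda points received by c_i from the two orders is at most 2k − a_i. -/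
/-- **2NMTS ↔ Borda manipulation core.** Let `a_1, …, a_k` (indexed by `Fin k`, with
`a i` playing the role of `a_{i+1}`) be positive integers with `a_i ≤ 2k` and
`∑ a_i = k(k+1)`. Candidates are `Option (Fin k)`: `none` is the preferred candidate
`p` and `some i` is `c_{i+1}`; a vote is an equivalence onto `Fin (k+1)` giving each
candidate its position (position `0` is the top, Borda points `k - position`).
Permutations of `{1, …, k}` are encoded as `Equiv.Perm (Fin k)`, with `ψ i + 1` the
actual value in `{1, …, k}`. Then the 2NMTS instance has a solution iff there are two
votes ranking `p` first after which every `c_i` gains at most `2k - a_i` Borda points. -/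
theorem twoNMTS_iff_borda (k : ℕ) (hk : 1 ≤ k) (a : Fin k → ℕ)
    (ha : ∀ i, 1 ≤ a i ∧ a i ≤ 2 * k) (hsum : ∑ i, a i = k * (k + 1)) :
    (∃ ψ₁ ψ₂ : Equiv.Perm (Fin k),
      ∀ i, (((ψ₁ i : ℕ) + 1) + ((ψ₂ i : ℕ) + 1)) = a i) ↔
    (∃ v₁ v₂ : Option (Fin k) ≃ Fin (k + 1),
      v₁ none = 0 ∧ v₂ none = 0 ∧
      ∀ i : Fin k,
        (k - (v₁ (some i) : ℕ)) + (k - (v₂ (some i) : ℕ)) ≤ 2 * k - a i) := by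
  constructor
  · rintro ⟨ψ₁, ψ₂, hψ⟩
    refine ⟨(Equiv.optionCongr ψ₁).trans (finSuccEquiv k).symm,
      (Equiv.optionCongr ψ₂).trans (finSuccEquiv k).symm, by simp, by simp, fun i => ?_⟩
    have h1 : (((Equiv.optionCongr ψ₁).trans (finSuccEquiv k).symm) (some i) : ℕ)
        = (ψ₁ i : ℕ) + 1 := by
      simp [finSuccEquiv_symm_some, Fin.val_succ]
    have h2 : (((Equiv.optionCongr ψ₂).trans (finSuccEquiv k).symm) (some i) : ℕ)
        = (ψ₂ i : ℕ) + 1 := by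
      simp [finSuccEquiv_symm_some, Fin.val_succ]
    rw [h1, h2]
    have b1 : (ψ₁ i : ℕ) < k := (ψ₁ i).isLt
    have b2 : (ψ₂ i : ℕ) < k := (ψ₂ i).isLt
    have := hψ i
    have := (ha i).2
    omega
  · rintro ⟨v₁, v₂, hv₁, hv₂, hle⟩
    -- positions of the `c_i` are nonzero
    have hpos : ∀ (v : Option (Fin k) ≃ Fin (k+1)), v none = 0 → ∀ i : Fin k,
        1 ≤ (v (some i) : ℕ) := by
      intro v hv i
      have hne : v (some i) ≠ 0 := fun h =>
        Option.some_ne_none _ (v.injective (h.trans hv.symm))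
      have : (v (some i) : ℕ) ≠ 0 := fun h => hne (Fin.ext (by simp [h]))
      omega
    have hlek : ∀ (v : Option (Fin k) ≃ Fin (k+1)) (i : Fin k),
        (v (some i) : ℕ) ≤ k := fun v i => Nat.lt_succ_iff.mp (v (some i)).isLt
    -- each vote's positions over the `c_i` sum to k(k+1)/2, so the pair sums to k(k+1)
    have hsumv : ∀ (v : Option (Fin k) ≃ Fin (k+1)), v none = 0 →
        2 * ∑ i : Fin k, (v (some i) : ℕ) = k * (k + 1) := by
      intro v hv
      have h1 : ∑ x : Option (Fin k), (v x : ℕ) = ∑ j : Fin (k+1), (j : ℕ) := by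
        simpa using Equiv.sum_comp v (fun j => (j : ℕ))
      rw [Fintype.sum_option] at h1
      rw [hv] at h1
      simp at h1
      have h2 : ∑ j : Fin (k+1), (j : ℕ) = ∑ j ∈ Finset.range (k+1), j := by
        simpa using Fin.sum_univ_eq_sum_range (fun j => j) (k+1)
      have h3 : (∑ j ∈ Finset.range (k+1), j) * 2 = (k+1) * k := by
        simpa using Finset.sum_range_id_mul_two (k+1)
      have h4 : (k+1) * k = k * (k+1) := Nat.mul_comm _ _
      rw [h1, h2]
      omega
    -- pointwise: a i ≤ v₁ + v₂
    have hpt : ∀ i, a i ≤ (v₁ (some i) : ℕ) + (v₂ (some i) : ℕ) := by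
      intro i
      have := hle i
      have := (ha i).1
      have := (ha i).2
      have := hpos v₁ hv₁ i
      have := hpos v₂ hv₂ i
      have := hlek v₁ i
      have := hlek v₂ i
      omega
    -- sums agree, so pointwise equality
    have hsums : ∑ i, ((v₁ (some i) : ℕ) + (v₂ (some i) : ℕ)) = ∑ i, a i := by
      rw [Finset.sum_add_distrib, hsum]
      have h1 := hsumv v₁ hv₁
      have h2 := hsumv v₂ hv₂
      omega
    have heq : ∀ i, (v₁ (some i) : ℕ) + (v₂ (some i) : ℕ) = a i := by
      intro i
      have := (Finset.sum_eq_sum_iff_of_le (fun i _ => hpt i)).mp hsums.symm i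
        (Finset.mem_univ i)
      omega
    -- build the permutations
    have key : ∀ (v : Option (Fin k) ≃ Fin (k+1)), v none = 0 →
        ∃ ψ : Equiv.Perm (Fin k), ∀ i, (ψ i : ℕ) + 1 = (v (some i) : ℕ) := by
      intro v hv
      set e : Option (Fin k) ≃ Option (Fin k) := v.trans (finSuccEquiv k)
      refine ⟨Equiv.removeNone e, fun i => ?_⟩
      obtain ⟨j, hj⟩ : ∃ j : Fin k, v (some i) = j.succ := by
        refine ⟨⟨(v (some i) : ℕ) - 1, by have := hpos v hv i; have := (v (some i)).isLt; omega⟩, ?_⟩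
        have := hpos v hv i
        apply Fin.ext
        simp [Fin.val_succ]
        omega
      have he : e (some i) = some j := by
        simp only [e, Equiv.trans_apply, hj, finSuccEquiv_succ]
      have := Equiv.removeNone_some e ⟨j, he⟩
      rw [he] at this
      have hrj : Equiv.removeNone e i = j := Option.some_injective _ this
      rw [hrj, hj, Fin.val_succ]
    obtain ⟨ψ₁, hψ₁⟩ := key v₁ hv₁
    obtain ⟨ψ₂, hψ₂⟩ := key v₂ hv₂
    exact ⟨ψ₁, ψ₂, fun i => by rw [hψ₁ i, hψ₂ i, heq i]⟩
end
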